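/- For every integer n ≥ 4 there is no constant λ ∈ ℂ such that for all trace-zero n×n complex matrices X, the trace of (ad X)⁴ as an endomorphism of sl(n,ℂ) equals λ·(tr(X²))². -/

import Mathlib

open LieAlgebra LieAlgebra.SpecialLinear Matrix Finset

attribute [local instance 100] LieRing.ofAssociativeRing

section Aux

variable {n : ℕ}

/-- Inner sum expansion. -/
private lemma slq_inner_sum (d : Fin n → ℂ) (i : Fin n) :
    ∑ j, (d i - d j) ^ 4 =
      (n : ℂ) * d i ^ 4 - (∑ j, d j) * (4 * d i ^ 3) + (∑ j, d j ^ 2) * (6 * d i ^ 2)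
        - (∑ j, d j ^ 3) * (4 * d i) + (∑ j, d j ^ 4) := by
  have hn' : (n : ℂ) * d i ^ 4 = ∑ _j : Fin n, d i ^ 4 := by
    simp [Finset.sum_const, Finset.card_univ, mul_comm]
  rw [hn', Finset.sum_mul, Finset.sum_mul, Finset.sum_mul, ← Finset.sum_sub_distrib,
    ← Finset.sum_add_distrib, ← Finset.sum_sub_distrib, ← Finset.sum_add_distrib]
  exact Finset.sum_congr rfl fun j _ => by ring

/-- The double sum formula. -/
private lemma slq_double_sum (d : Fin n → ℂ) :
    ∑ i, ∑ j, (d i - d j) ^ 4 =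
      2 * (n : ℂ) * (∑ i, d i ^ 4) + 6 * (∑ i, d i ^ 2) ^ 2
        - 8 * (∑ i, d i) * (∑ i, d i ^ 3) := by
  simp only [slq_inner_sum d]
  simp only [Finset.sum_add_distrib, Finset.sum_sub_distrib, ← Finset.mul_sum,
    Finset.sum_const, Finset.card_univ, Fintype.card_fin, nsmul_eq_mul]
  ring

/-- Eigenvalue of ad of a diagonal matrix on a standard basis matrix. -/
private lemma ad_diag_stdBasis (d : Fin n → ℂ) (i j : Fin n) :
    (ad ℂ (Matrix (Fin n) (Fin n) ℂ) (diagonal d)) (Matrix.single i j 1) =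
      (d i - d j) • Matrix.single i j 1 := by
  ext a c
  simp only [ad_apply, Ring.lie_def, Matrix.sub_apply, Matrix.diagonal_mul, Matrix.mul_diagonal,
    Matrix.smul_apply, smul_eq_mul, Matrix.single, Matrix.of_apply]
  by_cases h : i = a ∧ j = c
  · obtain ⟨rfl, rfl⟩ := h
    simp
  · simp [h]

/-- Trace of `(ad X)^4` on all matrices, for diagonal `X`. -/
private lemma trace_ad_pow_gl (d : Fin n → ℂ) :
    LinearMap.trace ℂ (Matrix (Fin n) (Fin n) ℂ)
        ((ad ℂ (Matrix (Fin n) (Fin n) ℂ) (diagonal d)) ^ 4) =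
      ∑ i, ∑ j, (d i - d j) ^ 4 := by
  classical
  set D := ad ℂ (Matrix (Fin n) (Fin n) ℂ) (diagonal d) with hD
  set b := Matrix.stdBasis ℂ (Fin n) (Fin n) with hb
  have heig : ∀ p : Fin n × Fin n, D (b p) = (d p.1 - d p.2) • b p := by
    rintro ⟨i, j⟩
    rw [hb, Matrix.stdBasis_eq_single]
    exact ad_diag_stdBasis d i j
  have hpow : ∀ p : Fin n × Fin n, (D ^ 4) (b p) = (d p.1 - d p.2) ^ 4 • b p := by
    intro p
    have key : ∀ k : ℕ, (D ^ k) (b p) = (d p.1 - d p.2) ^ k • b p := by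
      intro k
      induction k with
      | zero => simp
      | succ m ih =>
        rw [pow_succ, Module.End.mul_apply, heig, _root_.map_smul, ih, smul_smul, ← pow_succ']
    exact key 4
  rw [LinearMap.trace_eq_matrix_trace ℂ b, Matrix.trace]
  have hdiag : ∀ p : Fin n × Fin n,
      (LinearMap.toMatrix b b (D ^ 4)).diag p = (d p.1 - d p.2) ^ 4 := by
    intro p
    rw [Matrix.diag_apply, LinearMap.toMatrix_apply, hpow, _root_.map_smul]
    simp
  rw [Finset.sum_congr rfl fun p _ => hdiag p]
  exact Fintype.sum_prod_type _

/-- Trace on sl equals trace on gl. -/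
private lemma trace_ad_pow_sl (X : Matrix (Fin n) (Fin n) ℂ) (hX : X.trace = 0) :
    LinearMap.trace ℂ (sl (Fin n) ℂ) ((ad ℂ (sl (Fin n) ℂ) ⟨X, hX⟩) ^ 4) =
      LinearMap.trace ℂ (Matrix (Fin n) (Fin n) ℂ)
        ((ad ℂ (Matrix (Fin n) (Fin n) ℂ) X) ^ 4) := by
  classical
  set p : Submodule ℂ (Matrix (Fin n) (Fin n) ℂ) := LieSubalgebra.toSubmodule (sl (Fin n) ℂ) with hp
  set D := ad ℂ (Matrix (Fin n) (Fin n) ℂ) X with hDdef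
  have hmem : ∀ A, D A ∈ p := by
    intro A
    rw [hp, LieSubalgebra.mem_toSubmodule]
    show D A ∈ LinearMap.ker (Matrix.traceLinearMap (Fin n) ℂ ℂ)
    rw [LinearMap.mem_ker]
    show Matrix.trace (D A) = 0
    have : D A = ⁅X, A⁆ := rfl
    rw [this]
    exact matrix_trace_commutator_zero _ _ _ _
  set D' : Matrix (Fin n) (Fin n) ℂ →ₗ[ℂ] p := D.codRestrict p hmem with hD'
  set ι : p →ₗ[ℂ] Matrix (Fin n) (Fin n) ℂ := p.subtype with hι
  have hcomp : ι ∘ₗ D' = D := LinearMap.subtype_comp_codRestrict _ _ _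
  have had : (ad ℂ (sl (Fin n) ℂ) ⟨X, hX⟩ : (sl (Fin n) ℂ) →ₗ[ℂ] (sl (Fin n) ℂ)) =
      D' ∘ₗ ι := by
    ext Y
    exact rfl
  have e1 : (D' ∘ₗ ι) ^ 4 = D' ∘ₗ (((ι ∘ₗ D') ^ 3) ∘ₗ ι) := by
    ext y
    simp [pow_succ, Module.End.mul_apply]
  have e2 : (ι ∘ₗ D') ^ 4 = ((((ι ∘ₗ D') ^ 3) ∘ₗ ι) ∘ₗ D') := by
    rw [pow_succ]
    rfl
  rw [had, e1, LinearMap.trace_comp_comm', ← e2, hcomp]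

end Aux

open LieAlgebra LieAlgebra.SpecialLinear in
/-- For every `n ≥ 4` there is no constant `λ ∈ ℂ` such that for all trace-zero `n×n`
complex matrices `X`, the trace of `(ad X)⁴` as an endomorphism of `sl(n,ℂ)` equals
`λ·(tr(X²))²`. -/
theorem sl_no_quartic_trace_identity (n : ℕ) (hn : 4 ≤ n) :
    ¬ ∃ lam : ℂ, ∀ (X : Matrix (Fin n) (Fin n) ℂ) (hX : X.trace = 0),
      LinearMap.trace ℂ (sl (Fin n) ℂ)
          ((ad ℂ (sl (Fin n) ℂ) ⟨X, hX⟩) ^ 4) =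
        lam * (X ^ 2).trace ^ 2 := by
  classical
  rintro ⟨lam, h⟩
  -- helper to compute sums of functions supported on `{0,1,2,3}`
  have hsum : ∀ g : ℕ → ℂ, (∀ m, 4 ≤ m → g m = 0) →
      (∑ i : Fin n, g i) = g 0 + g 1 + g 2 + g 3 := by
    intro g hg
    rw [Fin.sum_univ_eq_sum_range]
    rw [← Finset.sum_subset (Finset.range_subset_range.mpr hn)
      (fun x _ hx => hg x (by simpa using hx))]
    simp [Finset.sum_range_succ]
  -- the two witnesses
  set e1 : ℕ → ℂ := fun m => if m = 0 then 1 else if m = 1 then -1 else 0 with he1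
  set e2 : ℕ → ℂ := fun m => if m < 2 then 1 else if m < 4 then -1 else 0 with he2
  have hsum1 : ∀ k : ℕ, k ≠ 0 → ∑ i : Fin n, e1 (i : ℕ) ^ k = 1 + (-1 : ℂ) ^ k := by
    intro k hk
    have := hsum (fun m => e1 m ^ k) (fun m hm => by
      simp only [he1]
      rw [if_neg (by omega), if_neg (by omega), zero_pow hk])
    simp only [he1] at this ⊢
    rw [this]
    norm_num [zero_pow hk]
  have hsum2 : ∀ k : ℕ, k ≠ 0 → ∑ i : Fin n, e2 (i : ℕ) ^ k = 2 + 2 * (-1 : ℂ) ^ k := by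
    intro k hk
    have := hsum (fun m => e2 m ^ k) (fun m hm => by
      simp only [he2]
      rw [if_neg (by omega), if_neg (by omega), zero_pow hk])
    simp only [he2] at this ⊢
    rw [this]
    norm_num
    ring
  -- general consequence of the hypothesis for diagonal matrices
  have key : ∀ d : Fin n → ℂ, Matrix.trace (diagonal d) = 0 →
      2 * (n : ℂ) * (∑ i, d i ^ 4) + 6 * (∑ i, d i ^ 2) ^ 2
          - 8 * (∑ i, d i) * (∑ i, d i ^ 3)
        = lam * (∑ i, d i ^ 2) ^ 2 := by
    intro d hd
    have hX := h (diagonal d) hd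
    rw [trace_ad_pow_sl, trace_ad_pow_gl, slq_double_sum] at hX
    have h2 : ((diagonal d) ^ 2).trace = ∑ i, d i ^ 2 := by
      rw [pow_two, diagonal_mul_diagonal, trace_diagonal]
      exact Finset.sum_congr rfl fun i _ => (pow_two (d i)).symm
    rw [h2] at hX
    exact hX
  -- first witness
  have htr1 : Matrix.trace (diagonal fun i : Fin n => e1 (i : ℕ)) = 0 := by
    rw [trace_diagonal]
    have := hsum1 1 one_ne_zero
    simpa using this
  have hS1 : ∑ i : Fin n, e1 (i : ℕ) = 0 := by
    have := hsum1 1 one_ne_zero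
    simpa using this
  have eq1 := key (fun i => e1 (i : ℕ)) htr1
  rw [hsum1 4 (by norm_num), hsum1 2 (by norm_num), hsum1 3 (by norm_num), hS1] at eq1
  norm_num at eq1
  -- second witness
  have htr2 : Matrix.trace (diagonal fun i : Fin n => e2 (i : ℕ)) = 0 := by
    rw [trace_diagonal]
    have := hsum2 1 one_ne_zero
    simpa using this
  have hS2 : ∑ i : Fin n, e2 (i : ℕ) = 0 := by
    have := hsum2 1 one_ne_zero
    simpa using this
  have eq2 := key (fun i => e2 (i : ℕ)) htr2
  rw [hsum2 4 (by norm_num), hsum2 2 (by norm_num), hsum2 3 (by norm_num), hS2] at eq2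
  norm_num at eq2
  -- derive the contradiction
  have hcast : (n : ℂ) = 0 := by linear_combination (4 * eq1 - eq2) / 8
  have : n = 0 := by exact_mod_cast hcast
  omega
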